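/- (Plücker relations for Pfaffians, equation (75)) Let R be a commutative ring, I a type, and a : I → I → R with a i j = −a j i and a i i = 0 for all i, j. For a finite sequence of indices i₁,…,i_{2s} ∈ I write (i₁,…,i_{2s}) for the Pfaffian of the 2s×2s skew-symmetric matrix (a_{i_k i_l})_{1≤k,l≤2s}, with the convention that the empty Pfaffian equals 1. Then for all odd positive integers K and L and all indices i₁,…,i_K, j₁,…,j_L ∈ I: Σ_{l=1}^L (−1)^l·(i₁,…,i_K,j_l)·(j₁,…,ĵ_l,…,j_L) + Σ_{k=1}^K (−1)^k·(i₁,…,î_k,…,i_K)·(j₁,…,j_L,i_k) = 0, where a hat means the corresponding index is omitted. -/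

import Mathlib

open scoped BigOperators

noncomputable section

/-- The index `2k` in `Fin (2m)`, for `k : Fin m`. -/
def fin2 {m : ℕ} (k : Fin m) : Fin (2*m) := ⟨2 * (k : ℕ), by have := k.isLt; omega⟩

/-- The index `2k+1` in `Fin (2m)`, for `k : Fin m`. -/
def fin2' {m : ℕ} (k : Fin m) : Fin (2*m) := ⟨2 * (k : ℕ) + 1, by have := k.isLt; omega⟩

/-- The Pfaffian of a `2m × 2m` (skew-symmetric) matrix:
`Pf a = ∑ sgn(σ) ∏_{k=1}^m a_{σ(2k−1) σ(2k)}`, summed over permutations `σ` with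
`σ(1) < σ(3) < ⋯ < σ(2m−1)` and `σ(2k−1) < σ(2k)` for all `k`.  For `m = 0` this is
the empty Pfaffian, equal to `1`. -/
noncomputable def Pf {R : Type*} [CommRing R] (m : ℕ) (a : Fin (2*m) → Fin (2*m) → R) : R :=
  ∑ σ ∈ Finset.univ.filter (fun σ : Equiv.Perm (Fin (2*m)) =>
      (∀ k : Fin m, σ (fin2 k) < σ (fin2' k)) ∧
      ∀ k l : Fin m, k < l → σ (fin2 k) < σ (fin2 l)),
    (Equiv.Perm.sign σ : ℤ) • ∏ k : Fin m, a (σ (fin2 k)) (σ (fin2' k))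

namespace PfAux

open Equiv Equiv.Perm

/-- lift a permutation of `Fin n` to one of `Fin (n+1)` fixing `0`. -/
def gfix {n : ℕ} (e : Perm (Fin n)) : Perm (Fin (n+1)) :=
  Equiv.Perm.decomposeFin.symm (0, e)

@[simp] lemma gfix_zero {n : ℕ} (e : Perm (Fin n)) : gfix e 0 = 0 := by
  simp [gfix]

@[simp] lemma gfix_succ {n : ℕ} (e : Perm (Fin n)) (i : Fin n) :
    gfix e i.succ = (e i).succ := by
  simp [gfix, Equiv.Perm.decomposeFin_symm_apply_succ]

@[simp] lemma gfix_sign {n : ℕ} (e : Perm (Fin n)) :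
    Equiv.Perm.sign (gfix e) = Equiv.Perm.sign e := by
  simp [gfix, Equiv.Perm.decomposeFin.symm_sign]

lemma gfix_exists {n : ℕ} (σ : Perm (Fin (n+1))) (h : σ 0 = 0) : ∃ e, gfix e = σ := by
  obtain ⟨⟨p, e⟩, hpe⟩ : ∃ pe, Equiv.Perm.decomposeFin.symm pe = σ :=
    ⟨_, Equiv.symm_apply_apply _ σ⟩
  have hp : p = 0 := by rw [← h, ← hpe]; simp
  exact ⟨e, by rw [gfix, ← hp, hpe]⟩

/-- insert a pair `(0, k+1)` in front of the matching perm `τ`. -/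
def ins {n : ℕ} (k : Fin (n+1)) (τ : Perm (Fin n)) : Perm (Fin (n+2)) :=
  gfix (Fin.cycleRange k)⁻¹ * gfix (gfix τ)

@[simp] lemma ins_zero {n : ℕ} (k : Fin (n+1)) (τ : Perm (Fin n)) : ins k τ 0 = 0 := by
  simp [ins, Perm.mul_apply]

@[simp] lemma ins_one {n : ℕ} (k : Fin (n+1)) (τ : Perm (Fin n)) : ins k τ 1 = k.succ := by
  have h0 : (1 : Fin (n+2)) = (0 : Fin (n+1)).succ := by
    ext; simp
  rw [ins, Perm.mul_apply, h0, gfix_succ, gfix_zero, gfix_succ]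
  congr 1
  rw [Equiv.Perm.inv_eq_iff_eq]
  exact (Fin.cycleRange_self k).symm

@[simp] lemma ins_ss {n : ℕ} (k : Fin (n+1)) (τ : Perm (Fin n)) (i : Fin n) :
    ins k τ i.succ.succ = (k.succAbove (τ i)).succ := by
  rw [ins, Perm.mul_apply, gfix_succ, gfix_succ, gfix_succ]
  congr 1
  rw [Equiv.Perm.inv_eq_iff_eq]
  exact (Fin.cycleRange_succAbove k (τ i)).symm

@[simp] lemma ins_sign {n : ℕ} (k : Fin (n+1)) (τ : Perm (Fin n)) :
    Equiv.Perm.sign (ins k τ) = (-1) ^ (k : ℕ) * Equiv.Perm.sign τ := by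
  simp [ins, Fin.sign_cycleRange]

lemma ins_inj {n : ℕ} {k k' : Fin (n+1)} {τ τ' : Perm (Fin n)}
    (h : ins k τ = ins k' τ') : k = k' ∧ τ = τ' := by
  have h1 : k.succ = k'.succ := by
    rw [← ins_one k τ, ← ins_one k' τ', h]
  have hk : k = k' := Fin.succ_injective _ h1
  refine ⟨hk, ?_⟩
  ext i
  have h2 : (k.succAbove (τ i)).succ = (k'.succAbove (τ' i)).succ := by
    rw [← ins_ss k τ i, ← ins_ss k' τ' i, h]
  have h3 := Fin.succ_injective _ h2
  rw [hk] at h3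
  exact congrArg Fin.val (Fin.succAbove_right_injective h3)

lemma ins_surj {n : ℕ} (σ : Perm (Fin (n+2))) (h0 : σ 0 = 0) :
    ∃ (k : Fin (n+1)) (τ : Perm (Fin n)), ins k τ = σ := by
  have h1 : σ 1 ≠ 0 := by
    intro h
    have h2 := congrArg Fin.val (σ.injective (h.trans h0.symm))
    simp at h2
  set k : Fin (n+1) := (σ 1).pred h1 with hk
  have hσ1 : σ 1 = k.succ := by simp [hk]
  refine ⟨k, ?_⟩
  set ρ : Perm (Fin (n+2)) := (gfix (Fin.cycleRange k)⁻¹)⁻¹ * σ with hρ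
  have hρ0 : ρ 0 = 0 := by
    rw [hρ, Perm.mul_apply, h0, Equiv.Perm.inv_eq_iff_eq]
    simp
  obtain ⟨e, he⟩ := gfix_exists ρ hρ0
  have hone : (1 : Fin (n+2)) = (0 : Fin (n+1)).succ := by ext; simp
  have hρ1 : ρ 1 = 1 := by
    have hgs : gfix (Fin.cycleRange k)⁻¹ 1 = σ 1 := by
      rw [hσ1, hone, gfix_succ]
      congr 1
      rw [Equiv.Perm.inv_eq_iff_eq]
      exact (Fin.cycleRange_self k).symm
    rw [hρ, Perm.mul_apply, ← hgs]
    simp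
  have he0 : e 0 = 0 := by
    rw [← he, hone, gfix_succ] at hρ1
    exact Fin.succ_injective _ (hρ1.trans hone)
  obtain ⟨τ, hτ⟩ := gfix_exists e he0
  refine ⟨τ, ?_⟩
  rw [ins, hτ, he, hρ]
  group

lemma fin2_zero {m : ℕ} : fin2 (0 : Fin (m+1)) = (0 : Fin (2*(m+1))) := by
  ext; simp [fin2]

lemma fin2'_zero {m : ℕ} : fin2' (0 : Fin (m+1)) = (1 : Fin (2*(m+1))) := by
  ext; simp [fin2', Fin.val_one']

lemma fin2_succ {m : ℕ} (j : Fin m) :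
    fin2 (j.succ) = ((fin2 j).succ.succ : Fin (2*m+1+1)) := by
  ext; simp [fin2]; omega

lemma fin2'_succ {m : ℕ} (j : Fin m) :
    fin2' (j.succ) = ((fin2' j).succ.succ : Fin (2*m+1+1)) := by
  ext; simp [fin2']; omega

lemma ins_cond {m : ℕ} (k : Fin (2*m+1)) (τ : Perm (Fin (2*m))) :
    ((∀ k' : Fin (m+1), ins k τ (fin2 k') < ins k τ (fin2' k')) ∧
      ∀ k' l' : Fin (m+1), k' < l' → ins k τ (fin2 k') < ins k τ (fin2 l'))
    ↔ ((∀ j : Fin m, τ (fin2 j) < τ (fin2' j)) ∧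
      ∀ j l : Fin m, j < l → τ (fin2 j) < τ (fin2 l)) := by
  have e0 : ins k τ (fin2 (0 : Fin (m+1))) = 0 := by rw [fin2_zero]; exact ins_zero k τ
  have e1 : ins k τ (fin2' (0 : Fin (m+1))) = k.succ := by rw [fin2'_zero]; exact ins_one k τ
  have e2 : ∀ j : Fin m, ins k τ (fin2 j.succ) = (k.succAbove (τ (fin2 j))).succ := by
    intro j; rw [fin2_succ]; exact ins_ss k τ (fin2 j)
  have e3 : ∀ j : Fin m, ins k τ (fin2' j.succ) = (k.succAbove (τ (fin2' j))).succ := by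
    intro j; rw [fin2'_succ]; exact ins_ss k τ (fin2' j)
  constructor
  · rintro ⟨h1, h2⟩
    constructor
    · intro j
      have := h1 j.succ
      rw [e2, e3] at this
      exact Fin.succAbove_lt_succAbove_iff.1 (Fin.succ_lt_succ_iff.1 this)
    · intro j l hjl
      have := h2 j.succ l.succ (Fin.succ_lt_succ_iff.2 hjl)
      rw [e2, e2] at this
      exact Fin.succAbove_lt_succAbove_iff.1 (Fin.succ_lt_succ_iff.1 this)
  · rintro ⟨h1, h2⟩
    constructor
    · intro k'
      induction k' using Fin.cases with
      | zero =>
        rw [e0, e1]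
        exact Fin.succ_pos k
      | succ j =>
        rw [e2, e3]
        exact Fin.succ_lt_succ_iff.2 (Fin.succAbove_lt_succAbove_iff.2 (h1 j))
    · intro k' l' hkl
      induction l' using Fin.cases with
      | zero => exact absurd hkl (Fin.not_lt_zero k')
      | succ l =>
        induction k' using Fin.cases with
        | zero =>
          rw [e0, e2]
          exact Fin.succ_pos _
        | succ j =>
          rw [e2, e2]
          exact Fin.succ_lt_succ_iff.2 (Fin.succAbove_lt_succAbove_iff.2
            (h2 j l (Fin.succ_lt_succ_iff.1 hkl)))

lemma cond_zero {m : ℕ} (σ : Perm (Fin (2*(m+1))))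
    (h1 : ∀ k : Fin (m+1), σ (fin2 k) < σ (fin2' k))
    (h2 : ∀ k l : Fin (m+1), k < l → σ (fin2 k) < σ (fin2 l)) : σ 0 = 0 := by
  have hle : ∀ j : Fin (m+1), σ 0 ≤ σ (fin2 j) := by
    intro j
    by_cases h0j : (0 : Fin (m+1)) = j
    · rw [← h0j, fin2_zero]
    · have hlt : (0 : Fin (m+1)) < j := lt_of_le_of_ne (Fin.zero_le j) h0j
      have := h2 0 j hlt
      rw [fin2_zero] at this
      exact le_of_lt this
  have key : ∀ y : Fin (2*(m+1)), σ 0 ≤ σ y := by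
    intro y
    set j : Fin (m+1) := ⟨(y : ℕ)/2, by have := y.isLt; omega⟩ with hj
    rcases Nat.even_or_odd (y : ℕ) with he | ho
    · have hyj : y = fin2 j := by
        ext
        simp only [fin2, hj]
        obtain ⟨c, hc⟩ := he
        omega
      rw [hyj]; exact hle j
    · have hyj : y = fin2' j := by
        ext
        simp only [fin2', hj]
        obtain ⟨c, hc⟩ := ho
        omega
      rw [hyj]
      exact le_trans (hle j) (le_of_lt (h1 j))
  have hfin := key (σ.symm 0)
  rw [Equiv.apply_symm_apply] at hfin
  exact Fin.le_zero_iff.1 hfin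

theorem Pf_succ {R : Type*} [CommRing R] (m : ℕ) (a : Fin (2*(m+1)) → Fin (2*(m+1)) → R) :
    Pf (m+1) a = ∑ k : Fin (2*m+1), (-1 : R)^(k : ℕ) * a 0 k.succ *
      Pf m (fun p q => a ((k.succAbove p).succ) ((k.succAbove q).succ)) := by
  have key : ∀ k : Fin (2*m+1),
      (-1 : R)^(k : ℕ) * a 0 k.succ *
        Pf m (fun p q => a ((k.succAbove p).succ) ((k.succAbove q).succ))
      = ∑ τ ∈ Finset.univ.filter (fun τ : Perm (Fin (2*m)) =>
          (∀ j : Fin m, τ (fin2 j) < τ (fin2' j)) ∧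
          ∀ j l : Fin m, j < l → τ (fin2 j) < τ (fin2 l)),
          (Equiv.Perm.sign (ins k τ) : ℤ) •
            (a 0 k.succ * ∏ j : Fin m,
              a ((k.succAbove (τ (fin2 j))).succ) ((k.succAbove (τ (fin2' j))).succ)) := by
    intro k
    rw [Pf, Finset.mul_sum]
    refine Finset.sum_congr rfl (fun τ hτ => ?_)
    rw [ins_sign, zsmul_eq_mul, zsmul_eq_mul]
    push_cast
    ring
  rw [Pf]
  rw [Finset.sum_congr rfl (fun k _ => key k), ← Finset.sum_product']
  refine (Finset.sum_bij (fun p _ => ins p.1 p.2) ?_ ?_ ?_ ?_).symm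
  · rintro ⟨k, τ⟩ hp
    rw [Finset.mem_product, Finset.mem_filter] at hp
    rw [Finset.mem_filter]
    exact ⟨Finset.mem_univ _, (ins_cond k τ).2 hp.2.2⟩
  · rintro ⟨k, τ⟩ h1 ⟨k', τ'⟩ h2 heq
    obtain ⟨hk, hτ⟩ := ins_inj heq
    exact Prod.ext hk hτ
  · intro σ hσ
    rw [Finset.mem_filter] at hσ
    obtain ⟨k, τ, hins⟩ := ins_surj σ (cond_zero σ hσ.2.1 hσ.2.2)
    refine ⟨⟨k, τ⟩, ?_, hins⟩
    rw [Finset.mem_product, Finset.mem_filter]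
    refine ⟨Finset.mem_univ _, Finset.mem_univ _, ?_⟩
    rw [← ins_cond k τ]
    rw [hins]
    exact hσ.2
  · rintro ⟨k, τ⟩ hp
    have e1 : ins k τ (fin2 (0 : Fin (m+1))) = 0 := by rw [fin2_zero]; exact ins_zero k τ
    have e2 : ins k τ (fin2' (0 : Fin (m+1))) = k.succ := by rw [fin2'_zero]; exact ins_one k τ
    have e3 : ∀ j : Fin m, ins k τ (fin2 j.succ) = (k.succAbove (τ (fin2 j))).succ := by
      intro j; rw [fin2_succ]; exact ins_ss k τ (fin2 j)
    have e4 : ∀ j : Fin m, ins k τ (fin2' j.succ) = (k.succAbove (τ (fin2' j))).succ := by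
      intro j; rw [fin2'_succ]; exact ins_ss k τ (fin2' j)
    show (Equiv.Perm.sign (ins k τ) : ℤ) •
        (a 0 k.succ * ∏ j : Fin m,
          a ((k.succAbove (τ (fin2 j))).succ) ((k.succAbove (τ (fin2' j))).succ))
      = (Equiv.Perm.sign (ins k τ) : ℤ) •
        ∏ j : Fin (m+1), a (ins k τ (fin2 j)) (ins k τ (fin2' j))
    congr 1
    rw [Fin.prod_univ_succ, e1, e2]
    congr 1
    exact Finset.prod_congr rfl (fun j _ => by rw [e3 j, e4 j])

lemma succAbove_val {n : ℕ} (p : Fin (n+1)) (i : Fin n) :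
    ((p.succAbove i : Fin (n+1)) : ℕ) = if (i : ℕ) < (p : ℕ) then (i : ℕ) else (i : ℕ) + 1 := by
  rw [Fin.succAbove]
  split_ifs with h1 h2 h2 <;> simp_all [Fin.lt_def] <;> omega

lemma neg_one_pow_parity {R : Type*} [Monoid R] [HasDistribNeg R] {p q : ℕ}
    (h : p % 2 = q % 2) : (-1 : R)^p = (-1 : R)^q := by
  rcases Nat.even_or_odd p with hp | hp
  · rw [hp.neg_one_pow, Even.neg_one_pow (by rw [Nat.even_iff] at hp ⊢; omega)]
  · rw [hp.neg_one_pow, Odd.neg_one_pow (by rw [Nat.odd_iff] at hp ⊢; omega)]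

lemma Pf_zero {R : Type*} [CommRing R] (a : Fin (2*0) → Fin (2*0) → R) : Pf 0 a = 1 := by
  rw [Pf]
  rw [Finset.filter_true_of_mem (fun σ _ => ⟨fun k => k.elim0, fun k => k.elim0⟩)]
  have : (Finset.univ : Finset (Equiv.Perm (Fin (2*0)))) = {1} := by
    apply Finset.eq_singleton_iff_unique_mem.2
    refine ⟨Finset.mem_univ _, fun σ _ => ?_⟩
    ext x
    exact absurd x.isLt (by omega)
  rw [this, Finset.sum_singleton]
  simp

/-- the reindexing bijection for the double-sum comparison. -/
def pairEquiv (N : ℕ) : Fin (N+1) × Fin N ≃ Fin (N+1) × Fin N where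
  toFun p := if h : (p.2 : ℕ) < (p.1 : ℕ) then
      (⟨(p.2 : ℕ), by have := p.2.isLt; omega⟩, ⟨(p.1 : ℕ) - 1, by have := p.1.isLt; have := p.2.isLt; omega⟩)
    else
      (⟨(p.2 : ℕ) + 1, by have := p.2.isLt; omega⟩, ⟨(p.1 : ℕ), by have := p.1.isLt; have := p.2.isLt; omega⟩)
  invFun p := if h : (p.1 : ℕ) ≤ (p.2 : ℕ) then
      (⟨(p.2 : ℕ) + 1, by have := p.2.isLt; omega⟩, ⟨(p.1 : ℕ), by have := p.1.isLt; have := p.2.isLt; omega⟩)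
    else
      (⟨(p.2 : ℕ), by have := p.2.isLt; omega⟩, ⟨(p.1 : ℕ) - 1, by have := p.1.isLt; have := p.2.isLt; omega⟩)
  left_inv := by
    rintro ⟨c, j⟩
    have hc := c.isLt
    have hj := j.isLt
    dsimp only
    split_ifs with h1 h2 h2 <;> (try dsimp only at h2) <;>
      refine Prod.ext (Fin.ext ?_) (Fin.ext ?_) <;> dsimp only <;> omega
  right_inv := by
    rintro ⟨c, j⟩
    have hc := c.isLt
    have hj := j.isLt
    dsimp only
    split_ifs with h1 h2 h2 <;> (try dsimp only at h2) <;>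
      refine Prod.ext (Fin.ext ?_) (Fin.ext ?_) <;> dsimp only <;> omega

lemma pairEquiv_spec (N : ℕ) (c : Fin (N+1)) (j : Fin N) :
    (((pairEquiv N (c,j)).1 : ℕ) = (j : ℕ) ∧ ((pairEquiv N (c,j)).2 : ℕ) = (c : ℕ) - 1
      ∧ (j : ℕ) < (c : ℕ)) ∨
    (((pairEquiv N (c,j)).1 : ℕ) = (j : ℕ) + 1 ∧ ((pairEquiv N (c,j)).2 : ℕ) = (c : ℕ)
      ∧ (c : ℕ) ≤ (j : ℕ)) := by
  by_cases h : (j : ℕ) < (c : ℕ)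
  · left
    simp [pairEquiv, h]
  · right
    simp [pairEquiv, h]
    omega

lemma extra_eq {R : Type*} [CommRing R] (m : ℕ) (a : Fin (2*(m+2)) → Fin (2*(m+2)) → R) :
    (-1:R)^((Fin.last (2*(m+1)) : Fin (2*(m+1)+1)) : ℕ) * a 0 (Fin.last (2*(m+1))).succ *
      Pf (m+1) (fun p q => a (((Fin.last (2*(m+1))).succAbove p).succ)
        (((Fin.last (2*(m+1))).succAbove q).succ))
    = (-1:R)^(((0 : Fin (2*(m+1)+1))) : ℕ) *
        a (0 : Fin (2*(m+1)+1)).castSucc (Fin.last (2*(m+1)+1)) *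
      Pf (m+1) (fun p q => a (((0 : Fin (2*(m+1)+1)).succAbove p).castSucc)
        (((0 : Fin (2*(m+1)+1)).succAbove q).castSucc)) := by
  have h1 : ((Fin.last (2*(m+1))).succ : Fin (2*(m+2))) = Fin.last (2*(m+1)+1) := by
    apply Fin.ext
    simp
  have h2 : ((0 : Fin (2*(m+1)+1)).castSucc : Fin (2*(m+2))) = 0 := by
    apply Fin.ext
    simp
  have h3 : (fun (p q : Fin (2*(m+1))) => a (((Fin.last (2*(m+1))).succAbove p).succ)
        (((Fin.last (2*(m+1))).succAbove q).succ))
      = (fun p q => a (((0 : Fin (2*(m+1)+1)).succAbove p).castSucc)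
        (((0 : Fin (2*(m+1)+1)).succAbove q).castSucc)) := by
    have e : ∀ r : Fin (2*(m+1)), (((Fin.last (2*(m+1))).succAbove r).succ : Fin (2*(m+2)))
        = ((0 : Fin (2*(m+1)+1)).succAbove r).castSucc := by
      intro r
      apply Fin.ext
      have := r.isLt
      simp only [Fin.val_succ, Fin.coe_castSucc, succAbove_val, Fin.val_last, Fin.val_zero,
        Fin.coe_ofNat_eq_mod, Nat.zero_mod, Nat.not_lt_zero, if_false]
      split_ifs <;> omega
    funext p q
    rw [e p, e q]
  rw [h1, h2, h3, Fin.val_last, Fin.val_zero, pow_zero,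
    Even.neg_one_pow ⟨m+1, by ring⟩, one_mul]

lemma step_term {R : Type*} [CommRing R] (m : ℕ) (a : Fin (2*(m+2)) → Fin (2*(m+2)) → R)
    (c : Fin (2*(m+1))) (j : Fin (2*m+1)) (c' : Fin (2*(m+1))) (j' : Fin (2*m+1))
    (hcase : (((c' : ℕ) = (j : ℕ) ∧ ((j' : ℕ) = (c : ℕ) - 1) ∧ (j : ℕ) < (c : ℕ)) ∨
      ((c' : ℕ) = (j : ℕ) + 1 ∧ (j' : ℕ) = (c : ℕ) ∧ (c : ℕ) ≤ (j : ℕ)))) :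
    (-1:R)^((c.castSucc : Fin (2*(m+1)+1)) : ℕ) * a 0 c.castSucc.succ *
      ((-1:R)^((j : ℕ)) * a ((c.castSucc.succAbove j.castSucc).succ)
          ((c.castSucc.succAbove (Fin.last (2*m+1))).succ) *
        Pf m (fun p q => a ((c.castSucc.succAbove ((j.succAbove p).castSucc)).succ)
          ((c.castSucc.succAbove ((j.succAbove q).castSucc)).succ)))
    = (-1:R)^((c'.succ : Fin (2*(m+1)+1)) : ℕ) * a (c'.succ.castSucc) (Fin.last (2*(m+1)+1)) *
      ((-1:R)^((j' : ℕ)) * a ((c'.succ.succAbove (0 : Fin (2*(m+1)))).castSucc)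
          ((c'.succ.succAbove (j'.succ)).castSucc) *
        Pf m (fun p q => a ((c'.succ.succAbove ((j'.succAbove p).succ)).castSucc)
          ((c'.succ.succAbove ((j'.succAbove q).succ)).castSucc))) := by
  have hc := c.isLt
  have hj := j.isLt
  have hc' := c'.isLt
  have hj' := j'.isLt
  have hfacts : ((c' : ℕ) = (j : ℕ) ∧ ((j' : ℕ) = (c : ℕ) - 1) ∧ (j : ℕ) < (c : ℕ)) ∨
      ((c' : ℕ) = (j : ℕ) + 1 ∧ (j' : ℕ) = (c : ℕ) ∧ (c : ℕ) ≤ (j : ℕ)) := hcase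
  have E1 : (c.castSucc.succ : Fin (2*(m+2))) = (c'.succ.succAbove (j'.succ)).castSucc := by
    apply Fin.ext
    simp only [Fin.val_succ, Fin.coe_castSucc, succAbove_val]
    rcases hfacts with ⟨e1, e2, e3⟩ | ⟨e1, e2, e3⟩ <;> split_ifs <;> omega
  have E2 : ((c.castSucc.succAbove j.castSucc).succ : Fin (2*(m+2))) = c'.succ.castSucc := by
    apply Fin.ext
    simp only [Fin.val_succ, Fin.coe_castSucc, succAbove_val]
    rcases hfacts with ⟨e1, e2, e3⟩ | ⟨e1, e2, e3⟩ <;> split_ifs <;> omega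
  have E3 : ((c.castSucc.succAbove (Fin.last (2*m+1))).succ : Fin (2*(m+2)))
      = Fin.last (2*(m+1)+1) := by
    apply Fin.ext
    simp only [Fin.val_succ, Fin.coe_castSucc, succAbove_val, Fin.val_last]
    split_ifs <;> omega
  have E4 : (0 : Fin (2*(m+2))) = (c'.succ.succAbove (0 : Fin (2*(m+1)))).castSucc := by
    apply Fin.ext
    simp only [Fin.val_succ, Fin.coe_castSucc, succAbove_val, Fin.val_zero,
      Fin.coe_ofNat_eq_mod, Nat.zero_mod, Nat.zero_lt_succ, if_true]
  have E5 : (fun (p q : Fin (2*m)) => a ((c.castSucc.succAbove ((j.succAbove p).castSucc)).succ)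
        ((c.castSucc.succAbove ((j.succAbove q).castSucc)).succ))
      = (fun p q => a ((c'.succ.succAbove ((j'.succAbove p).succ)).castSucc)
        ((c'.succ.succAbove ((j'.succAbove q).succ)).castSucc)) := by
    have e : ∀ r : Fin (2*m), ((c.castSucc.succAbove ((j.succAbove r).castSucc)).succ : Fin (2*(m+2)))
        = (c'.succ.succAbove ((j'.succAbove r).succ)).castSucc := by
      intro r
      have hr := r.isLt
      apply Fin.ext
      simp only [Fin.val_succ, Fin.coe_castSucc, succAbove_val]
      rcases hfacts with ⟨e1, e2, e3⟩ | ⟨e1, e2, e3⟩ <;> split_ifs <;> omega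
    funext p q
    rw [e p, e q]
  have Esign : (-1:R)^((c.castSucc : Fin (2*(m+1)+1)) : ℕ) * (-1:R)^((j : ℕ))
      = (-1:R)^((c'.succ : Fin (2*(m+1)+1)) : ℕ) * (-1:R)^((j' : ℕ)) := by
    rw [← pow_add, ← pow_add]
    apply neg_one_pow_parity
    simp only [Fin.coe_castSucc, Fin.val_succ]
    rcases hfacts with ⟨e1, e2, e3⟩ | ⟨e1, e2, e3⟩ <;> omega
  rw [← E5, ← E1, ← E2, ← E3, ← E4]
  set x := a 0 c.castSucc.succ with hx
  set y := a ((c.castSucc.succAbove j.castSucc).succ)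
    ((c.castSucc.succAbove (Fin.last (2*m+1))).succ) with hy
  set P := Pf m (fun p q => a ((c.castSucc.succAbove ((j.succAbove p).castSucc)).succ)
    ((c.castSucc.succAbove ((j.succAbove q).castSucc)).succ)) with hP
  linear_combination (x * y * P) * Esign

theorem Pf_snoc {R : Type*} [CommRing R] (m : ℕ) :
    ∀ (a : Fin (2*(m+1)) → Fin (2*(m+1)) → R),
    Pf (m+1) a = ∑ k : Fin (2*m+1), (-1 : R)^(k : ℕ) *
      a k.castSucc (Fin.last (2*m+1)) *
      Pf m (fun p q => a ((k.succAbove p).castSucc) ((k.succAbove q).castSucc)) := by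
  induction m with
  | zero =>
    intro a
    rw [Pf_succ 0 a]
    refine Finset.sum_congr rfl (fun z _ => ?_)
    simp only [Pf_zero, mul_one]
    have hz : (z : ℕ) = 0 := by have := z.isLt; omega
    have h1 : (z.succ : Fin (2*0+1+1)) = Fin.last (2*0+1) := by
      apply Fin.ext
      simp only [Fin.val_succ, Fin.val_last]
      omega
    have h2 : (z.castSucc : Fin (2*0+1+1)) = (0 : Fin (2*0+1+1)) := by
      apply Fin.ext
      simp only [Fin.coe_castSucc, Fin.val_zero, hz]
    rw [h1, h2]
  | succ m IH =>
    intro a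
    rw [Pf_succ (m+1) a]
    rw [Fin.sum_univ_castSucc]
    conv_rhs => rw [Fin.sum_univ_succ]
    conv_rhs => rw [add_comm]
    congr 1
    · -- main double sums
      trans (∑ c : Fin (2*(m+1)), ∑ j : Fin (2*m+1),
        (-1:R)^((c.castSucc : Fin (2*(m+1)+1)) : ℕ) * a 0 c.castSucc.succ *
          ((-1:R)^((j : ℕ)) * a ((c.castSucc.succAbove j.castSucc).succ)
              ((c.castSucc.succAbove (Fin.last (2*m+1))).succ) *
            Pf m (fun p q => a ((c.castSucc.succAbove ((j.succAbove p).castSucc)).succ)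
              ((c.castSucc.succAbove ((j.succAbove q).castSucc)).succ))))
      · exact Finset.sum_congr rfl (fun c _ => by rw [IH, Finset.mul_sum])
      trans (∑ c : Fin (2*(m+1)), ∑ j' : Fin (2*m+1),
        (-1:R)^((c.succ : Fin (2*(m+1)+1)) : ℕ) * a (c.succ.castSucc) (Fin.last (2*(m+1)+1)) *
          ((-1:R)^((j' : ℕ)) * a ((c.succ.succAbove (0 : Fin (2*(m+1)))).castSucc)
              ((c.succ.succAbove (j'.succ)).castSucc) *
            Pf m (fun p q => a ((c.succ.succAbove ((j'.succAbove p).succ)).castSucc)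
              ((c.succ.succAbove ((j'.succAbove q).succ)).castSucc))))
      · rw [← Finset.sum_product', ← Finset.sum_product']
        refine Finset.sum_equiv (pairEquiv (2*m+1)) (by simp) ?_
        rintro ⟨c, j⟩ -
        exact step_term m a c j (pairEquiv (2*m+1) (c, j)).1 (pairEquiv (2*m+1) (c, j)).2
          (pairEquiv_spec (2*m+1) c j)
      · exact (Finset.sum_congr rfl (fun c _ => by rw [Pf_succ m, Finset.mul_sum])).symm
    · exact extra_eq m a

end PfAux

/-- The Plücker relations (75) for Pfaffians: for a skew-symmetric array
`a : I → I → R`, odd `K = 2s+1`, `L = 2t+1`, and indices `i₁, …, i_K`, `j₁, …, j_L`,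
`∑_{l=1}^{L} (−1)^l (i₁,…,i_K,j_l)(j₁,…,ĵ_l,…,j_L)
 + ∑_{k=1}^{K} (−1)^k (i₁,…,î_k,…,i_K)(j₁,…,j_L,i_k) = 0`,
where `(i₁,…,i_{2s})` denotes the Pfaffian of the matrix `(a (i_k) (i_l))`. -/
theorem pluecker_relations_pfaffian {R : Type*} [CommRing R] {I : Type*}
    (a : I → I → R) (hskew : ∀ i j, a j i = - a i j) (hdiag : ∀ i, a i i = 0)
    (s t : ℕ) (iv : Fin (2*s+1) → I) (jv : Fin (2*t+1) → I) :
    ∑ l : Fin (2*t+1), (-1 : R) ^ ((l : ℕ) + 1) *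
        Pf (s+1) (fun p q =>
          a ((Fin.snoc iv (jv l) : Fin (2*s+1+1) → I) (Fin.cast (by omega) p))
            ((Fin.snoc iv (jv l) : Fin (2*s+1+1) → I) (Fin.cast (by omega) q))) *
        Pf t (fun p q => a (jv (l.succAbove p)) (jv (l.succAbove q)))
    + ∑ k : Fin (2*s+1), (-1 : R) ^ ((k : ℕ) + 1) *
        Pf s (fun p q => a (iv (k.succAbove p)) (iv (k.succAbove q))) *
        Pf (t+1) (fun p q =>
          a ((Fin.snoc jv (iv k) : Fin (2*t+1+1) → I) (Fin.cast (by omega) p))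
            ((Fin.snoc jv (iv k) : Fin (2*t+1+1) → I) (Fin.cast (by omega) q))) = 0 := by
  classical
  have hc1 : ∀ (e : 2*(s+1) = 2*s+1+1) (x : Fin (2*(s+1))), Fin.cast e x = x := fun _ _ => rfl
  have hc2 : ∀ (e : 2*(t+1) = 2*t+1+1) (x : Fin (2*(t+1))), Fin.cast e x = x := fun _ _ => rfl
  have hA : ∀ l : Fin (2*t+1),
      Pf (s+1) (fun p q =>
          a ((Fin.snoc iv (jv l) : Fin (2*s+1+1) → I) (Fin.cast (by omega) p))
            ((Fin.snoc iv (jv l) : Fin (2*s+1+1) → I) (Fin.cast (by omega) q)))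
      = ∑ k : Fin (2*s+1), (-1:R)^(k : ℕ) * a (iv k) (jv l) *
          Pf s (fun p q => a (iv (k.succAbove p)) (iv (k.succAbove q))) := by
    intro l
    rw [PfAux.Pf_snoc s]
    refine Finset.sum_congr rfl (fun k _ => ?_)
    simp only [hc1, Fin.snoc_castSucc, Fin.snoc_last]
  have hB : ∀ k : Fin (2*s+1),
      Pf (t+1) (fun p q =>
          a ((Fin.snoc jv (iv k) : Fin (2*t+1+1) → I) (Fin.cast (by omega) p))
            ((Fin.snoc jv (iv k) : Fin (2*t+1+1) → I) (Fin.cast (by omega) q)))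
      = ∑ l : Fin (2*t+1), (-1:R)^(l : ℕ) * a (jv l) (iv k) *
          Pf t (fun p q => a (jv (l.succAbove p)) (jv (l.succAbove q))) := by
    intro k
    rw [PfAux.Pf_snoc t]
    refine Finset.sum_congr rfl (fun l _ => ?_)
    simp only [hc2, Fin.snoc_castSucc, Fin.snoc_last]
  simp only [hA, hB]
  simp only [Finset.mul_sum, Finset.sum_mul]
  rw [Finset.sum_comm]
  rw [← Finset.sum_add_distrib]
  refine Finset.sum_eq_zero (fun k _ => ?_)
  rw [← Finset.sum_add_distrib]
  refine Finset.sum_eq_zero (fun l _ => ?_)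
  rw [hskew (iv k) (jv l)]
  ring

end
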